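/- arXiv:2009.02646 — 2 statements merged into one kernel-verified Lean document; each statement's English description precedes it below -/
import Mathlib

section
/- Let φ ∈ L²(Ω) on the square Ω = [0,1]² (with Lebesgue measure) and let m_k = ∫_Ω β₁^{k₁} β₂^{k₂} φ(β) dβ be its moment double sequence. Then for every n = (n₁,n₂) ∈ ℕ², (n₁+1)(n₂+1) · ∑_{k₁=0}^{n₁} ∑_{k₂=0}^{n₂} [binom(n₁,k₁) binom(n₂,k₂) · Δ₁^{n₁−k₁} Δ₂^{n₂−k₂} m_{k₁,k₂}]² ≤ ‖φ‖₂², where ‖φ‖₂ is the L²-norm of φ. -/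
open MeasureTheory

/-- The partial difference operator in the first index:
`(Δ₁m)_{k₁,k₂} = m_{k₁,k₂} − m_{k₁+1,k₂}`. -/
def D1 (m : ℕ → ℕ → ℝ) : ℕ → ℕ → ℝ := fun k1 k2 => m k1 k2 - m (k1 + 1) k2

/-- The partial difference operator in the second index:
`(Δ₂m)_{k₁,k₂} = m_{k₁,k₂} − m_{k₁,k₂+1}`. -/
def D2 (m : ℕ → ℕ → ℝ) : ℕ → ℕ → ℝ := fun k1 k2 => m k1 k2 - m k1 (k2 + 1)

/-- The unit square `Ω = [0,1]² ⊂ ℝ²`. -/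
def unitSquare : Set (ℝ × ℝ) := Set.Icc (0 : ℝ) 1 ×ˢ Set.Icc (0 : ℝ) 1

lemma measSq : MeasurableSet unitSquare :=
  measurableSet_Icc.prod measurableSet_Icc

lemma compactSq : IsCompact unitSquare :=
  isCompact_Icc.prod isCompact_Icc

lemma finiteSq : IsFiniteMeasure (volume.restrict unitSquare) :=
  ⟨by rw [Measure.restrict_apply_univ]; exact compactSq.measure_lt_top⟩

lemma mono_mem {x : ℝ} (hx : x ∈ Set.Icc (0:ℝ) 1) (a b : ℕ) :
    x ^ a * (1 - x) ^ b ∈ Set.Icc (0:ℝ) 1 := by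
  obtain ⟨h0, h1⟩ := hx
  constructor
  · have : (0:ℝ) ≤ 1 - x := by linarith
    positivity
  · have h0' : (0:ℝ) ≤ 1 - x := by linarith
    have h1' : (1:ℝ) - x ≤ 1 := by linarith
    exact mul_le_one₀ (pow_le_one₀ h0 h1) (pow_nonneg h0' b) (pow_le_one₀ h0' h1')

lemma integrable_mono {φ : ℝ × ℝ → ℝ}
    (hφ : Integrable φ (volume.restrict unitSquare)) (a b c d : ℕ) :
    Integrable (fun β : ℝ × ℝ =>
      (β.1 ^ a * (1 - β.1) ^ b) * (β.2 ^ c * (1 - β.2) ^ d) * φ β)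
      (volume.restrict unitSquare) := by
  refine hφ.bdd_mul (c := 1) (Continuous.aestronglyMeasurable (by fun_prop)) ?_
  filter_upwards [ae_restrict_mem measSq] with β hβ
  have h1 := mono_mem hβ.1 a b
  have h2 := mono_mem hβ.2 c d
  rw [Real.norm_eq_abs, abs_of_nonneg (mul_nonneg h1.1 h2.1)]
  exact mul_le_one₀ h1.2 h2.1 h2.2

lemma rep_integral {φ : ℝ × ℝ → ℝ}
    (hφ : Integrable φ (volume.restrict unitSquare)) {m : ℕ → ℕ → ℝ}
    (hm : ∀ k1 k2 : ℕ, m k1 k2 = ∫ β in unitSquare, β.1 ^ k1 * β.2 ^ k2 * φ β) :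
    ∀ j l k1 k2 : ℕ, (D1^[j] (D2^[l] m)) k1 k2 =
      ∫ β in unitSquare,
        (β.1 ^ k1 * (1 - β.1) ^ j) * (β.2 ^ k2 * (1 - β.2) ^ l) * φ β := by
  intro j
  induction j with
  | zero =>
    intro l
    induction l with
    | zero =>
      intro k1 k2
      simp only [Function.iterate_zero, id_eq]
      rw [hm k1 k2]
      refine integral_congr_ae (Filter.Eventually.of_forall fun β => ?_)
      ring
    | succ l ihl =>
      intro k1 k2
      simp only [Function.iterate_zero, id_eq] at ihl ⊢
      rw [Function.iterate_succ_apply']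
      show (D2^[l] m) k1 k2 - (D2^[l] m) k1 (k2+1) = _
      rw [ihl k1 k2, ihl k1 (k2+1),
        ← integral_sub (integrable_mono hφ k1 0 k2 l) (integrable_mono hφ k1 0 (k2+1) l)]
      refine integral_congr_ae (Filter.Eventually.of_forall fun β => ?_)
      ring
  | succ j ihj =>
    intro l k1 k2
    rw [Function.iterate_succ_apply']
    show (D1^[j] (D2^[l] m)) k1 k2 - (D1^[j] (D2^[l] m)) (k1+1) k2 = _
    rw [ihj l k1 k2, ihj l (k1+1) k2,
      ← integral_sub (integrable_mono hφ k1 j k2 l) (integrable_mono hφ (k1+1) j k2 l)]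
    refine integral_congr_ae (Filter.Eventually.of_forall fun β => ?_)
    ring

lemma beta_nat : ∀ (j k : ℕ), ∫ x in Set.Icc (0:ℝ) 1, x ^ k * (1 - x) ^ j =
    (k.factorial * j.factorial : ℝ) / (k + j + 1).factorial := by
  intro j
  induction j with
  | zero =>
    intro k
    simp only [pow_zero, mul_one, Nat.factorial_zero, Nat.cast_one, Nat.add_zero]
    rw [MeasureTheory.integral_Icc_eq_integral_Ioc,
      ← intervalIntegral.integral_of_le zero_le_one, integral_pow, Nat.factorial_succ]
    have hkf : (k.factorial : ℝ) ≠ 0 := Nat.cast_ne_zero.mpr k.factorial_ne_zero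
    have hk1 : ((k:ℝ) + 1) ≠ 0 := by positivity
    rw [one_pow, zero_pow (Nat.succ_ne_zero k)]
    push_cast
    field_simp
    norm_num
  | succ j ih =>
    intro k
    have h1 : ∀ x : ℝ, x ^ k * (1-x) ^ (j+1) = x^k * (1-x)^j - x^(k+1) * (1-x)^j := by
      intro x; ring
    simp_rw [h1]
    have hI1 : IntegrableOn (fun x : ℝ => x^k * (1-x)^j) (Set.Icc 0 1) volume :=
      Continuous.integrableOn_Icc (by fun_prop)
    have hI2 : IntegrableOn (fun x : ℝ => x^(k+1) * (1-x)^j) (Set.Icc 0 1) volume :=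
      Continuous.integrableOn_Icc (by fun_prop)
    rw [integral_sub hI1 hI2, ih k, ih (k+1)]
    have e1 : (k+1) + j + 1 = (k+j+1) + 1 := by omega
    have e2 : k + (j+1) + 1 = (k+j+1) + 1 := by omega
    rw [e1, e2, Nat.factorial_succ (k+j+1), Nat.factorial_succ k, Nat.factorial_succ j]
    have h0 : ((k+j+1).factorial : ℝ) ≠ 0 := Nat.cast_ne_zero.mpr (k+j+1).factorial_ne_zero
    have hkf : (k.factorial : ℝ) ≠ 0 := Nat.cast_ne_zero.mpr k.factorial_ne_zero
    have hjf : (j.factorial : ℝ) ≠ 0 := Nat.cast_ne_zero.mpr j.factorial_ne_zero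
    push_cast
    have hpos : ((k:ℝ) + (j:ℝ) + 1 + 1) ≠ 0 := by positivity
    field_simp
    ring

lemma bern_integral {n k : ℕ} (hk : k ≤ n) :
    ∫ x in Set.Icc (0:ℝ) 1, (n.choose k : ℝ) * (x ^ k * (1 - x) ^ (n - k))
      = 1 / ((n : ℝ) + 1) := by
  rw [integral_const_mul, beta_nat]
  have e : k + (n - k) + 1 = n + 1 := by omega
  rw [e, Nat.factorial_succ n]
  have hc : (n.choose k : ℝ) * ((k.factorial : ℝ) * ((n-k).factorial : ℝ)) = n.factorial := by
    rw [← mul_assoc]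
    exact_mod_cast congrArg Nat.cast (Nat.choose_mul_factorial_mul_factorial hk)
  have hnf : (0:ℝ) < n.factorial := by exact_mod_cast n.factorial_pos
  push_cast
  rw [mul_div_assoc']
  rw [show (n.choose k : ℝ) * ((k.factorial : ℝ) * ((n-k).factorial : ℝ)) = n.factorial from hc]
  rw [div_eq_div_iff (by positivity) (by positivity)]
  ring

lemma bern_sum (n : ℕ) (x : ℝ) :
    ∑ k ∈ Finset.range (n + 1), (n.choose k : ℝ) * (x ^ k * (1 - x) ^ (n - k)) = 1 := by
  calc ∑ k ∈ Finset.range (n + 1), (n.choose k : ℝ) * (x ^ k * (1 - x) ^ (n - k))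
      = ∑ k ∈ Finset.range (n + 1), x ^ k * (1-x) ^ (n - k) * (n.choose k : ℝ) :=
        Finset.sum_congr rfl fun k _ => by ring
    _ = (x + (1-x)) ^ n := (add_pow x (1-x) n).symm
    _ = 1 := by norm_num

lemma bern_mem {n k : ℕ} (hk : k ∈ Finset.range (n+1)) {x : ℝ} (hx : x ∈ Set.Icc (0:ℝ) 1) :
    (n.choose k : ℝ) * (x ^ k * (1 - x) ^ (n - k)) ∈ Set.Icc (0:ℝ) 1 := by
  constructor
  · exact mul_nonneg (Nat.cast_nonneg _) (mono_mem hx k (n-k)).1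
  · calc (n.choose k : ℝ) * (x ^ k * (1 - x) ^ (n - k))
        ≤ ∑ i ∈ Finset.range (n+1), (n.choose i : ℝ) * (x ^ i * (1 - x) ^ (n - i)) :=
        Finset.single_le_sum (f := fun i => (n.choose i : ℝ) * (x ^ i * (1 - x) ^ (n - i)))
          (fun i _ => mul_nonneg (Nat.cast_nonneg _) (mono_mem hx i (n-i)).1) hk
      _ = 1 := bern_sum n x

lemma sq_integral_prod (f g : ℝ → ℝ) :
    ∫ β in unitSquare, f β.1 * g β.2 =
      (∫ x in Set.Icc (0:ℝ) 1, f x) * ∫ x in Set.Icc (0:ℝ) 1, g x := by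
  have h : (volume : Measure (ℝ × ℝ)).restrict unitSquare =
      (volume.restrict (Set.Icc (0:ℝ) 1)).prod (volume.restrict (Set.Icc (0:ℝ) 1)) := by
    rw [unitSquare, Measure.volume_eq_prod, Measure.prod_restrict]
  rw [h]
  exact integral_prod_mul f g

lemma cs_step {φ : ℝ × ℝ → ℝ} (hφ : MemLp φ 2 (volume.restrict unitSquare))
    (g : ℝ × ℝ → ℝ) (hgc : Continuous g)
    (hg0 : ∀ β ∈ unitSquare, 0 ≤ g β) (hg1 : ∀ β ∈ unitSquare, g β ≤ 1) :
    (∫ β in unitSquare, g β * φ β) ^ 2 ≤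
      (∫ β in unitSquare, g β) * ∫ β in unitSquare, g β * (φ β) ^ 2 := by
  haveI := finiteSq
  set μ := volume.restrict unitSquare with hμ
  have hg01 : ∀ᵐ β ∂μ, 0 ≤ g β ∧ g β ≤ 1 := by
    filter_upwards [ae_restrict_mem measSq] with β hβ
    exact ⟨hg0 β hβ, hg1 β hβ⟩
  set f := fun β : ℝ × ℝ => Real.sqrt (g β) with hf
  set h := fun β : ℝ × ℝ => Real.sqrt (g β) * ‖φ β‖ with hh
  have hfc : Continuous f := Real.continuous_sqrt.comp hgc
  have hf2 : MemLp f 2 μ := by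
    refine MemLp.of_bound hfc.aestronglyMeasurable 1 ?_
    filter_upwards [hg01] with β hβ
    rw [Real.norm_eq_abs, abs_of_nonneg (Real.sqrt_nonneg _)]
    exact Real.sqrt_le_one.mpr hβ.2
  have hh2 : MemLp h 2 μ := by
    refine MemLp.of_le_mul (c := 1) hφ (hfc.aestronglyMeasurable.mul hφ.1.norm) ?_
    filter_upwards [hg01] with β hβ
    rw [hh]
    rw [Real.norm_eq_abs, abs_mul, abs_of_nonneg (Real.sqrt_nonneg _), abs_of_nonneg (norm_nonneg _)]
    exact mul_le_mul_of_nonneg_right (Real.sqrt_le_one.mpr hβ.2) (norm_nonneg _)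
  have hnn_f : 0 ≤ᵐ[μ] f := Filter.Eventually.of_forall fun β => Real.sqrt_nonneg _
  have hnn_h : 0 ≤ᵐ[μ] h :=
    Filter.Eventually.of_forall fun β => mul_nonneg (Real.sqrt_nonneg _) (norm_nonneg _)
  have hconj : Real.HolderConjugate 2 2 := (Real.holderConjugate_iff_eq_conjExponent one_lt_two).mpr (by norm_num)
  have key := integral_mul_le_Lp_mul_Lq_of_nonneg hconj hnn_f hnn_h
    (by simpa using hf2) (by simpa using hh2)
  have e1 : ∫ a, f a ^ (2:ℝ) ∂μ = ∫ a, g a ∂μ := by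
    refine integral_congr_ae ?_
    filter_upwards [hg01] with β hβ
    rw [show (2:ℝ) = ((2:ℕ):ℝ) by norm_num, Real.rpow_natCast, Real.sq_sqrt hβ.1]
  have e2 : ∫ a, h a ^ (2:ℝ) ∂μ = ∫ a, g a * φ a ^ 2 ∂μ := by
    refine integral_congr_ae ?_
    filter_upwards [hg01] with β hβ
    rw [show (2:ℝ) = ((2:ℕ):ℝ) by norm_num, Real.rpow_natCast, hh]
    rw [mul_pow, Real.sq_sqrt hβ.1, Real.norm_eq_abs, sq_abs]
  have e3 : ∫ a, f a * h a ∂μ = ∫ a, ‖g a * φ a‖ ∂μ := by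
    refine integral_congr_ae ?_
    filter_upwards [hg01] with β hβ
    rw [hf, hh, ← mul_assoc, Real.mul_self_sqrt hβ.1, Real.norm_eq_abs (g β * φ β),
      abs_mul, abs_of_nonneg hβ.1, Real.norm_eq_abs]
  rw [e1, e2, e3] at key
  have habs : |∫ a, g a * φ a ∂μ| ≤ ∫ a, ‖g a * φ a‖ ∂μ := by
    rw [← Real.norm_eq_abs]; exact norm_integral_le_integral_norm _
  have hA : 0 ≤ ∫ a, g a ∂μ :=
    integral_nonneg_of_ae (by filter_upwards [hg01] with β hβ using hβ.1)
  have hB : 0 ≤ ∫ a, g a * φ a ^ 2 ∂μ :=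
    integral_nonneg_of_ae
      (by filter_upwards [hg01] with β hβ using mul_nonneg hβ.1 (sq_nonneg _))
  have hsq : ∀ a : ℝ, 0 ≤ a → (a ^ ((1:ℝ)/2)) ^ 2 = a := by
    intro a ha
    rw [← Real.rpow_natCast (a ^ ((1:ℝ)/2)) 2, ← Real.rpow_mul ha]
    norm_num
  have chain := habs.trans key
  calc (∫ a, g a * φ a ∂μ) ^ 2 = |∫ a, g a * φ a ∂μ| ^ 2 := (sq_abs _).symm
    _ ≤ ((∫ a, g a ∂μ) ^ ((1:ℝ)/2) * (∫ a, g a * φ a ^ 2 ∂μ) ^ ((1:ℝ)/2)) ^ 2 := by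
        apply pow_le_pow_left₀ (abs_nonneg _)
        convert chain using 3 <;> norm_num
    _ = (∫ a, g a ∂μ) * ∫ a, g a * φ a ^ 2 ∂μ := by
        rw [mul_pow, hsq _ hA, hsq _ hB]

/-- Necessity part of the `L²` Hausdorff moment problem on `[0,1]²`: the moment
double sequence of `φ ∈ L²([0,1]²)` satisfies
`(n₁+1)(n₂+1) ∑ₖ [binom(n₁,k₁)binom(n₂,k₂) Δ₁^{n₁−k₁}Δ₂^{n₂−k₂} m_k]² ≤ ‖φ‖₂²`,
where `‖φ‖₂² = ∫_Ω φ²`. -/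
theorem moment_sum_le_L2_norm_sq (φ : ℝ × ℝ → ℝ)
    (hφ : MemLp φ 2 (volume.restrict unitSquare)) (m : ℕ → ℕ → ℝ)
    (hm : ∀ k1 k2 : ℕ, m k1 k2 = ∫ β in unitSquare, β.1 ^ k1 * β.2 ^ k2 * φ β) :
    ∀ n1 n2 : ℕ,
      ((n1 : ℝ) + 1) * ((n2 : ℝ) + 1) *
        ∑ k1 ∈ Finset.range (n1 + 1), ∑ k2 ∈ Finset.range (n2 + 1),
          ((n1.choose k1 : ℝ) * (n2.choose k2 : ℝ) *
            (D1^[n1 - k1] (D2^[n2 - k2] m)) k1 k2) ^ 2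
        ≤ ∫ β in unitSquare, (φ β) ^ 2 := by
  intro n1 n2
  haveI := finiteSq
  have hφint : Integrable φ (volume.restrict unitSquare) := hφ.integrable one_le_two
  have hφsq : Integrable (fun β => φ β ^ 2) (volume.restrict unitSquare) := hφ.integrable_sq
  set g : ℕ → ℕ → ℝ × ℝ → ℝ := fun k1 k2 β =>
    ((n1.choose k1 : ℝ) * (β.1 ^ k1 * (1 - β.1) ^ (n1 - k1))) *
    ((n2.choose k2 : ℝ) * (β.2 ^ k2 * (1 - β.2) ^ (n2 - k2))) with hgdef
  have hgcont : ∀ k1 k2 : ℕ, Continuous (g k1 k2) := by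
    intro k1 k2; simp only [hgdef]; fun_prop
  have hg0 : ∀ k1 ∈ Finset.range (n1+1), ∀ k2 ∈ Finset.range (n2+1),
      ∀ β ∈ unitSquare, 0 ≤ g k1 k2 β := by
    intro k1 hk1 k2 hk2 β hβ
    exact mul_nonneg (bern_mem hk1 hβ.1).1 (bern_mem hk2 hβ.2).1
  have hg1 : ∀ k1 ∈ Finset.range (n1+1), ∀ k2 ∈ Finset.range (n2+1),
      ∀ β ∈ unitSquare, g k1 k2 β ≤ 1 := by
    intro k1 hk1 k2 hk2 β hβ
    have h1 := bern_mem hk1 hβ.1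
    have h2 := bern_mem hk2 hβ.2
    exact mul_le_one₀ h1.2 h2.1 h2.2
  have hterm : ∀ k1 ∈ Finset.range (n1+1), ∀ k2 ∈ Finset.range (n2+1),
      (n1.choose k1 : ℝ) * (n2.choose k2 : ℝ) * (D1^[n1-k1] (D2^[n2-k2] m)) k1 k2
        = ∫ β in unitSquare, g k1 k2 β * φ β := by
    intro k1 _ k2 _
    rw [rep_integral hφint hm (n1-k1) (n2-k2) k1 k2, ← integral_const_mul]
    refine integral_congr_ae (Filter.Eventually.of_forall fun β => ?_)
    simp only [hgdef]; ring
  have hval : ∀ k1 ∈ Finset.range (n1+1), ∀ k2 ∈ Finset.range (n2+1),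
      ∫ β in unitSquare, g k1 k2 β = 1 / (((n1:ℝ)+1) * ((n2:ℝ)+1)) := by
    intro k1 hk1 k2 hk2
    have h := sq_integral_prod
      (fun x => (n1.choose k1 : ℝ) * (x ^ k1 * (1 - x) ^ (n1 - k1)))
      (fun x => (n2.choose k2 : ℝ) * (x ^ k2 * (1 - x) ^ (n2 - k2)))
    simp only [hgdef]
    rw [h, bern_integral (Nat.lt_succ_iff.mp (Finset.mem_range.mp hk1)),
      bern_integral (Nat.lt_succ_iff.mp (Finset.mem_range.mp hk2)),
      div_mul_div_comm, one_mul]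
  have hintsq : ∀ k1 k2 : ℕ, Integrable (fun β => g k1 k2 β * φ β ^ 2)
      (volume.restrict unitSquare) := by
    intro k1 k2
    refine hφsq.bdd_mul (c := (n1.choose k1 : ℝ) * (n2.choose k2 : ℝ))
      (hgcont k1 k2).aestronglyMeasurable ?_
    filter_upwards [ae_restrict_mem measSq] with β hβ
    have h1 := mono_mem hβ.1 k1 (n1-k1)
    have h2 := mono_mem hβ.2 k2 (n2-k2)
    simp only [hgdef]
    rw [Real.norm_eq_abs, abs_of_nonneg
      (mul_nonneg (mul_nonneg (Nat.cast_nonneg _) h1.1) (mul_nonneg (Nat.cast_nonneg _) h2.1))]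
    refine mul_le_mul ?_ ?_ (mul_nonneg (Nat.cast_nonneg _) h2.1) (Nat.cast_nonneg _)
    · calc (n1.choose k1 : ℝ) * (β.1 ^ k1 * (1 - β.1) ^ (n1 - k1))
          ≤ (n1.choose k1 : ℝ) * 1 := mul_le_mul_of_nonneg_left h1.2 (Nat.cast_nonneg _)
        _ = _ := mul_one _
    · calc (n2.choose k2 : ℝ) * (β.2 ^ k2 * (1 - β.2) ^ (n2 - k2))
          ≤ (n2.choose k2 : ℝ) * 1 := mul_le_mul_of_nonneg_left h2.2 (Nat.cast_nonneg _)
        _ = _ := mul_one _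
  have hcs : ∀ k1 ∈ Finset.range (n1+1), ∀ k2 ∈ Finset.range (n2+1),
      ((n1.choose k1 : ℝ) * (n2.choose k2 : ℝ) *
        (D1^[n1-k1] (D2^[n2-k2] m)) k1 k2) ^ 2
        ≤ 1 / (((n1:ℝ)+1) * ((n2:ℝ)+1)) * ∫ β in unitSquare, g k1 k2 β * φ β ^ 2 := by
    intro k1 hk1 k2 hk2
    rw [hterm k1 hk1 k2 hk2]
    have := cs_step hφ (g k1 k2) (hgcont k1 k2) (hg0 k1 hk1 k2 hk2) (hg1 k1 hk1 k2 hk2)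
    rwa [hval k1 hk1 k2 hk2] at this
  have hN : (0:ℝ) < ((n1:ℝ)+1) * ((n2:ℝ)+1) := by positivity
  calc ((n1 : ℝ) + 1) * ((n2 : ℝ) + 1) *
        ∑ k1 ∈ Finset.range (n1 + 1), ∑ k2 ∈ Finset.range (n2 + 1),
          ((n1.choose k1 : ℝ) * (n2.choose k2 : ℝ) *
            (D1^[n1 - k1] (D2^[n2 - k2] m)) k1 k2) ^ 2
      ≤ ((n1 : ℝ) + 1) * ((n2 : ℝ) + 1) *
        ∑ k1 ∈ Finset.range (n1 + 1), ∑ k2 ∈ Finset.range (n2 + 1),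
          1 / (((n1:ℝ)+1) * ((n2:ℝ)+1)) * ∫ β in unitSquare, g k1 k2 β * φ β ^ 2 := by
        refine mul_le_mul_of_nonneg_left ?_ hN.le
        exact Finset.sum_le_sum fun k1 hk1 => Finset.sum_le_sum fun k2 hk2 => hcs k1 hk1 k2 hk2
    _ = ∑ k1 ∈ Finset.range (n1 + 1), ∑ k2 ∈ Finset.range (n2 + 1),
          ∫ β in unitSquare, g k1 k2 β * φ β ^ 2 := by
        simp_rw [← Finset.mul_sum]
        rw [← mul_assoc, mul_one_div, div_self hN.ne', one_mul]
    _ = ∫ β in unitSquare,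
          ∑ k1 ∈ Finset.range (n1 + 1), ∑ k2 ∈ Finset.range (n2 + 1),
            g k1 k2 β * φ β ^ 2 := by
        calc ∑ k1 ∈ Finset.range (n1+1), ∑ k2 ∈ Finset.range (n2+1),
              ∫ β in unitSquare, g k1 k2 β * φ β ^ 2
            = ∑ k1 ∈ Finset.range (n1+1), ∫ β in unitSquare,
                ∑ k2 ∈ Finset.range (n2+1), g k1 k2 β * φ β ^ 2 :=
              Finset.sum_congr rfl fun k1 _ =>
                (integral_finset_sum _ (fun k2 _ => hintsq k1 k2)).symm
          _ = _ := (integral_finset_sum _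
              (fun k1 _ => integrable_finset_sum _ (fun k2 _ => hintsq k1 k2))).symm
    _ = ∫ β in unitSquare, (φ β) ^ 2 := by
        refine integral_congr_ae (Filter.Eventually.of_forall fun β => ?_)
        simp only [hgdef]
        simp_rw [← Finset.sum_mul, ← Finset.mul_sum]
        rw [← Finset.sum_mul, bern_sum, bern_sum]
        ring
end

section
/- Let 0 < δ < 1, let Ω_x and Ω_y be the 3×3 real matrices Ω_x = [[0,0,0],[0,0,−1],[0,1,0]] and Ω_y = [[0,0,1],[0,0,0],[−1,0,0]], let u, v : ℝ → ℝ, and let M : ℝ × [1−δ,1+δ] → ℝ³ be continuous, with ∂M/∂t existing and continuous on ℝ × [1−δ,1+δ], satisfying the Bloch ensemble equation ∂M/∂t(t,ε) = ε (u(t) Ω_y + v(t) Ω_x) M(t,ε) for all t and all ε ∈ [1−δ,1+δ]. Then for each k ∈ ℕ, the k-th ensemble moment m_k(t) = ∫_{1−δ}^{1+δ} ε^k M(t,ε) dε is differentiable in t and satisfies d/dt m_k(t) = (u(t) Ω_y + v(t) Ω_x) m_{k+1}(t). -/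
open MeasureTheory

/-- The generator of rotations around the `x`-axis. -/
def Omx : Matrix (Fin 3) (Fin 3) ℝ := !![0, 0, 0; 0, 0, -1; 0, 1, 0]

/-- The generator of rotations around the `y`-axis. -/
def Omy : Matrix (Fin 3) (Fin 3) ℝ := !![0, 0, 1; 0, 0, 0; -1, 0, 0]

/-- The moment system of the Bloch ensemble
`∂M/∂t(t,ε) = ε (u(t) Ω_y + v(t) Ω_x) M(t,ε)`, `ε ∈ [1−δ,1+δ]`, is the chain
network `d/dt m_k(t) = (u(t) Ω_y + v(t) Ω_x) m_{k+1}(t)`, where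
`m_k(t) = ∫_{1−δ}^{1+δ} ε^k M(t,ε) dε`. -/
theorem bloch_moment_dynamics (δ : ℝ) (hδ0 : 0 < δ) (hδ1 : δ < 1)
    (u v : ℝ → ℝ) (M : ℝ → ℝ → Fin 3 → ℝ)
    (hMcont : ContinuousOn (fun p : ℝ × ℝ => M p.1 p.2)
      (Set.univ ×ˢ Set.Icc (1 - δ) (1 + δ)))
    (hBloch : ∀ t : ℝ, ∀ ε ∈ Set.Icc (1 - δ) (1 + δ),
      HasDerivAt (fun s => M s ε)
        (ε • (u t • Omy + v t • Omx).mulVec (M t ε)) t)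
    (hM'cont : ContinuousOn
      (fun p : ℝ × ℝ => p.2 • (u p.1 • Omy + v p.1 • Omx).mulVec (M p.1 p.2))
      (Set.univ ×ˢ Set.Icc (1 - δ) (1 + δ))) :
    ∀ (k : ℕ) (t : ℝ),
      HasDerivAt (fun s => ∫ ε in Set.Icc (1 - δ) (1 + δ), ε ^ k • M s ε)
        ((u t • Omy + v t • Omx).mulVec
          (∫ ε in Set.Icc (1 - δ) (1 + δ), ε ^ (k + 1) • M t ε)) t := by
  intro k t
  set I : Set ℝ := Set.Icc (1 - δ) (1 + δ) with hI
  have hImeas : MeasurableSet I := measurableSet_Icc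
  have hIcomp : IsCompact I := isCompact_Icc
  set A : ℝ → Matrix (Fin 3) (Fin 3) ℝ := fun s => u s • Omy + v s • Omx with hAdef
  -- the derivative function
  set F' : ℝ → ℝ → Fin 3 → ℝ :=
    fun s ε => ε ^ (k + 1) • (A s).mulVec (M s ε) with hF'def
  set g : ℝ × ℝ → Fin 3 → ℝ :=
    fun p => p.2 • (A p.1).mulVec (M p.1 p.2) with hgdef
  have hF'g : ∀ s ε, F' s ε = ε ^ k • g (s, ε) := by
    intro s ε
    simp only [hF'def, hgdef, smul_smul, pow_succ]
  -- measurability of F s on I for each s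
  have hmeasF : ∀ s : ℝ, AEStronglyMeasurable (fun ε => ε ^ k • M s ε)
      (volume.restrict I) := by
    intro s
    apply ContinuousOn.aestronglyMeasurable _ hImeas
    apply ContinuousOn.smul (continuousOn_pow k)
    intro ε hε
    have := hMcont.comp (f := fun ε : ℝ => ((s, ε) : ℝ × ℝ))
      ((Continuous.prodMk_right _).continuousOn)
      (fun ε hε => ⟨Set.mem_univ _, hε⟩)
    exact this ε hε
  have hmeasF' : AEStronglyMeasurable (F' t) (volume.restrict I) := by
    apply ContinuousOn.aestronglyMeasurable _ hImeas
    simp only [funext fun ε => hF'g t ε]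
    apply ContinuousOn.smul (continuousOn_pow k)
    exact hM'cont.comp (f := fun ε : ℝ => ((t, ε) : ℝ × ℝ))
      ((Continuous.prodMk_right _).continuousOn)
      (fun ε hε => ⟨Set.mem_univ _, hε⟩)
  -- integrability of F t
  have hintF : ∀ s : ℝ, Integrable (fun ε => ε ^ k • M s ε) (volume.restrict I) := by
    intro s
    apply ContinuousOn.integrableOn_compact hIcomp
    apply ContinuousOn.smul (continuousOn_pow k)
    exact hMcont.comp (f := fun ε : ℝ => ((s, ε) : ℝ × ℝ))
      ((Continuous.prodMk_right _).continuousOn)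
      (fun ε hε => ⟨Set.mem_univ _, hε⟩)
  -- bound on compact set
  obtain ⟨C, hC⟩ : ∃ C, ∀ p ∈ Set.Icc (t - 1) (t + 1) ×ˢ I, ‖g p‖ ≤ C := by
    apply IsCompact.exists_bound_of_continuousOn (isCompact_Icc.prod hIcomp)
    exact hM'cont.mono (Set.prod_mono (Set.subset_univ _) le_rfl)
  have hbound : ∀ᵐ ε ∂(volume.restrict I), ∀ s ∈ Metric.ball t 1,
      ‖F' s ε‖ ≤ 2 ^ k * max C 0 := by
    rw [ae_restrict_iff' hImeas]
    filter_upwards with ε hε s hs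
    rw [hF'g]
    rw [norm_smul]
    have h1 : ‖ε ^ k‖ ≤ 2 ^ k := by
      rw [norm_pow, Real.norm_eq_abs]
      apply pow_le_pow_left₀ (abs_nonneg ε)
      rw [abs_le]
      constructor <;> [linarith [hε.1]; linarith [hε.2]]
    have h2 : ‖g (s, ε)‖ ≤ max C 0 := by
      refine le_max_of_le_left (hC _ ⟨?_, hε⟩)
      rw [Metric.mem_ball, Real.dist_eq, abs_lt] at hs
      constructor <;> simp <;> linarith [hs.1, hs.2]
    exact mul_le_mul h1 h2 (norm_nonneg _) (by positivity)
  -- differentiability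
  have hdiff : ∀ᵐ ε ∂(volume.restrict I), ∀ s ∈ Metric.ball t 1,
      HasDerivAt (fun s => ε ^ k • M s ε) (F' s ε) s := by
    rw [ae_restrict_iff' hImeas]
    filter_upwards with ε hε s hs
    have heq : F' s ε = ε ^ k • (ε • (A s).mulVec (M s ε)) := by
      rw [hF'g]
    rw [heq]
    exact (hBloch s ε hε).const_smul (ε ^ k)
  have key := hasDerivAt_integral_of_dominated_loc_of_deriv_le
    (μ := volume.restrict I) (Metric.ball_mem_nhds t one_pos)
    (Filter.Eventually.of_forall hmeasF) (hintF t) hmeasF' hbound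
    (integrable_const _) hdiff
  have hder := key.2
  have hint' : Integrable (fun ε => ε ^ (k + 1) • M t ε) (volume.restrict I) := by
    apply ContinuousOn.integrableOn_compact hIcomp
    apply ContinuousOn.smul (continuousOn_pow (k + 1))
    exact hMcont.comp (f := fun ε : ℝ => ((t, ε) : ℝ × ℝ))
      ((Continuous.prodMk_right _).continuousOn)
      (fun ε hε => ⟨Set.mem_univ _, hε⟩)
  -- pull mulVec out
  let L : (Fin 3 → ℝ) →L[ℝ] (Fin 3 → ℝ) :=
    LinearMap.toContinuousLinearMap (Matrix.mulVecLin (A t))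
  have hLint : (∫ ε in I, F' t ε) = (A t).mulVec (∫ ε in I, ε ^ (k + 1) • M t ε) := by
    have : ∀ ε : ℝ, F' t ε = L (ε ^ (k + 1) • M t ε) := by
      intro ε
      simp only [F', L, LinearMap.coe_toContinuousLinearMap',
        Matrix.mulVecLin_apply, Matrix.mulVec_smul]
    simp_rw [this]
    rw [ContinuousLinearMap.integral_comp_comm L hint']
    simp [L]
  rwa [hLint] at hder
end
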